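/- arXiv:1301.6257 — 6 statements merged into one kernel-verified Lean document; each statement's English description precedes it below -/
import Mathlib

section
/- Let ε, C, R be positive real numbers with C·R·ε < 1. Let H : [0,ε] → ℝ be continuous on [0,ε], differentiable on (0,ε), with H(0) = 0. Let φ, ξ : [0,ε] → ℝ be continuous functions with φ(t) > 0 and ξ(t) ≥ 0 for all t ∈ [0,ε], and suppose that (1/φ(t))·∫₀ᵗ ξ(s) ds ≤ 2C for every t ∈ [0,ε]. If H′(t) ≤ −(R/2)·(1/φ(t))·∫₀ᵗ H(s)·ξ(s) ds for every t ∈ (0,ε), then H(t) ≤ 0 for every t ∈ [0,ε). -/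
open Set intervalIntegral

/-- Case b) (inf R^M > 0) of the proof of Proposition 4.1:
if `C·R·ε < 1`, `H(0) = 0` and `H'` satisfies the integral differential inequality,
then `H ≤ 0` on `[0, ε)`. -/
theorem stmt_0 (ε C R : ℝ) (hε : 0 < ε) (hC : 0 < C) (hR : 0 < R)
    (hCRε : C * R * ε < 1)
    (H H' φ ξ : ℝ → ℝ)
    (hHcont : ContinuousOn H (Icc 0 ε))
    (hHderiv : ∀ t ∈ Ioo 0 ε, HasDerivAt H (H' t) t)
    (hH0 : H 0 = 0)
    (hφcont : ContinuousOn φ (Icc 0 ε))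
    (hξcont : ContinuousOn ξ (Icc 0 ε))
    (hφpos : ∀ t ∈ Icc 0 ε, 0 < φ t)
    (hξnonneg : ∀ t ∈ Icc 0 ε, 0 ≤ ξ t)
    (hbound : ∀ t ∈ Icc 0 ε, (1 / φ t) * ∫ s in (0:ℝ)..t, ξ s ≤ 2 * C)
    (hineq : ∀ t ∈ Ioo 0 ε,
      H' t ≤ -(R / 2) * ((1 / φ t) * ∫ s in (0:ℝ)..t, H s * ξ s)) :
    ∀ t ∈ Ico 0 ε, H t ≤ 0 := by
  rintro t ⟨ht0, htε⟩
  rcases eq_or_lt_of_le ht0 with h0 | h0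
  · rw [← h0, hH0]
  -- setup: subset facts
  have hsub : Icc (0:ℝ) t ⊆ Icc 0 ε := Icc_subset_Icc le_rfl htε.le
  -- minimizer of H on [0,t]
  obtain ⟨s, hs, hsmin⟩ := (isCompact_Icc).exists_isMinOn (nonempty_Icc.mpr ht0)
    (hHcont.mono hsub)
  set A : ℝ := -H s with hA
  have hAnn : 0 ≤ A := by
    have h := isMinOn_iff.mp hsmin 0 ⟨le_rfl, ht0⟩
    rw [hH0] at h
    simp only [hA]; linarith
  -- key derivative bound on (0, t)
  have hkey : ∀ u ∈ Ioo (0:ℝ) t, H' u ≤ C * R * A := by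
    rintro u ⟨hu0, hut⟩
    have huε : u ∈ Ioo (0:ℝ) ε := ⟨hu0, hut.trans htε⟩
    have huIcc : u ∈ Icc (0:ℝ) ε := ⟨hu0.le, huε.2.le⟩
    have hsubu : Icc (0:ℝ) u ⊆ Icc 0 ε := Icc_subset_Icc le_rfl huε.2.le
    have hξint : IntervalIntegrable ξ MeasureTheory.volume 0 u := by
      apply ContinuousOn.intervalIntegrable
      rw [uIcc_of_le hu0.le]
      exact hξcont.mono hsubu
    have hHξint : IntervalIntegrable (fun x => H x * ξ x) MeasureTheory.volume 0 u := by
      apply ContinuousOn.intervalIntegrable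
      rw [uIcc_of_le hu0.le]
      exact ((hHcont.mono hsubu).mul (hξcont.mono hsubu))
    have hcint : IntervalIntegrable (fun x => -A * ξ x) MeasureTheory.volume 0 u := by
      apply ContinuousOn.intervalIntegrable
      rw [uIcc_of_le hu0.le]
      exact (continuousOn_const.mul (hξcont.mono hsubu))
    set J : ℝ := ∫ x in (0:ℝ)..u, ξ x with hJ
    have hJnn : 0 ≤ J := by
      apply intervalIntegral.integral_nonneg hu0.le
      exact fun x hx => hξnonneg x (hsubu hx)
    have hJle : J ≤ 2 * C * φ u := by
      have h1 := hbound u huIcc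
      have hφu := hφpos u huIcc
      rw [div_mul_eq_mul_div, one_mul, div_le_iff₀ hφu] at h1
      linarith
    have hIge : -A * J ≤ ∫ x in (0:ℝ)..u, H x * ξ x := by
      rw [hJ, ← intervalIntegral.integral_const_mul]
      apply intervalIntegral.integral_mono_on hu0.le hcint hHξint
      intro x hx
      have hxt : x ∈ Icc (0:ℝ) t := ⟨hx.1, hx.2.trans hut.le⟩
      have := hsmin hxt
      have hξx := hξnonneg x (hsubu hx)
      have : -A ≤ H x := by simp only [hA, neg_neg]; exact this
      exact mul_le_mul_of_nonneg_right this hξx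
    have hφu := hφpos u huIcc
    have hPu : 0 < 1 / φ u := by positivity
    have h2 := hineq u huε
    set I : ℝ := ∫ x in (0:ℝ)..u, H x * ξ x
    -- show -(R/2) * ((1/φ u) * I) ≤ C * R * A
    have hPI : -(A * ((1 / φ u) * J)) ≤ (1 / φ u) * I := by
      have := mul_le_mul_of_nonneg_left hIge hPu.le
      nlinarith
    have hPJ : (1 / φ u) * J ≤ 2 * C := by
      rw [div_mul_eq_mul_div, one_mul, div_le_iff₀ hφu]
      linarith [hJle]
    have hPJnn : 0 ≤ (1 / φ u) * J := mul_nonneg hPu.le hJnn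
    have hRn : (0:ℝ) ≤ R / 2 := by positivity
    nlinarith [mul_le_mul_of_nonneg_left hPI hRn,
      mul_le_mul_of_nonneg_left (mul_le_mul_of_nonneg_left hPJ hAnn) hRn]
  -- monotonicity of g u = C*R*A*u - H u on [0,t]
  set g : ℝ → ℝ := fun u => C * R * A * u - H u with hg
  have hgmono : MonotoneOn g (Icc 0 t) := by
    apply monotoneOn_of_deriv_nonneg (convex_Icc 0 t)
    · exact (continuousOn_const.mul continuousOn_id).sub (hHcont.mono hsub)
    · intro x hx
      rw [interior_Icc] at hx
      have hd : HasDerivAt g (C * R * A - H' x) x := by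
        have := hHderiv x ⟨hx.1, hx.2.trans htε⟩
        have h := ((hasDerivAt_id x).const_mul (C * R * A)).sub this
        simp at h
        exact h
      exact hd.differentiableAt.differentiableWithinAt
    · intro x hx
      rw [interior_Icc] at hx
      have hd : HasDerivAt g (C * R * A - H' x) x := by
        have := hHderiv x ⟨hx.1, hx.2.trans htε⟩
        have h := ((hasDerivAt_id x).const_mul (C * R * A)).sub this
        simp at h
        exact h
      rw [hd.deriv]
      linarith [hkey x hx]
  have hgs : g s ≤ g t := hgmono hs (right_mem_Icc.mpr ht0) hs.2
  simp only [hg] at hgs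
  have hHs : H s = -A := by simp [hA]
  have hsnn : 0 ≤ s := hs.1
  have htle : t ≤ ε := htε.le
  -- H t ≤ -A + C*R*A*(t - s) ≤ (C*R*ε - 1)*A ≤ 0
  nlinarith [mul_nonneg (mul_nonneg (mul_nonneg hC.le hR.le) hAnn) hsnn,
    mul_le_mul_of_nonneg_left htle (mul_nonneg (mul_nonneg hC.le hR.le) hAnn)]
end

section
/- Let ε, C be positive real numbers and let R be a negative real number with −C·R·ε < 1. Let H : [0,ε] → ℝ be continuous on [0,ε], differentiable on (0,ε), with H(0) = 0. Let φ, ξ : [0,ε] → ℝ be continuous functions with φ(t) > 0 and ξ(t) ≥ 0 for all t ∈ [0,ε], and suppose that (1/φ(t))·∫₀ᵗ ξ(s) ds ≤ 2C for every t ∈ [0,ε]. If H′(t) ≤ −(R/2)·(1/φ(t))·∫₀ᵗ H(s)·ξ(s) ds for every t ∈ (0,ε), then H(t) ≤ 0 for every t ∈ [0,ε). -/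
open Set intervalIntegral

/-- Case c) (inf R^M < 0) of the proof of Proposition 4.1:
if `R < 0`, `−C·R·ε < 1`, `H(0) = 0` and `H'` satisfies the integral differential
inequality, then `H ≤ 0` on `[0, ε)`. -/
theorem stmt_1 (ε C R : ℝ) (hε : 0 < ε) (hC : 0 < C) (hR : R < 0)
    (hCRε : -(C * R * ε) < 1)
    (H H' φ ξ : ℝ → ℝ)
    (hHcont : ContinuousOn H (Icc 0 ε))
    (hHderiv : ∀ t ∈ Ioo 0 ε, HasDerivAt H (H' t) t)
    (hH0 : H 0 = 0)
    (hφcont : ContinuousOn φ (Icc 0 ε))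
    (hξcont : ContinuousOn ξ (Icc 0 ε))
    (hφpos : ∀ t ∈ Icc 0 ε, 0 < φ t)
    (hξnonneg : ∀ t ∈ Icc 0 ε, 0 ≤ ξ t)
    (hbound : ∀ t ∈ Icc 0 ε, (1 / φ t) * ∫ s in (0:ℝ)..t, ξ s ≤ 2 * C)
    (hineq : ∀ t ∈ Ioo 0 ε,
      H' t ≤ -(R / 2) * ((1 / φ t) * ∫ s in (0:ℝ)..t, H s * ξ s)) :
    ∀ t ∈ Ico 0 ε, H t ≤ 0 := by
  rintro t₀ ⟨ht₀0, ht₀ε⟩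
  by_contra hpos
  push_neg at hpos
  -- max of H on [0, t₀]
  have hsub : Icc (0:ℝ) t₀ ⊆ Icc 0 ε := Icc_subset_Icc le_rfl ht₀ε.le
  obtain ⟨t₁, ht₁mem, ht₁max⟩ :=
    (isCompact_Icc).exists_isMaxOn ⟨0, left_mem_Icc.2 ht₀0⟩ (hHcont.mono hsub)
  set M := H t₁ with hM
  have hMpos : 0 < M := lt_of_lt_of_le hpos (ht₁max (right_mem_Icc.2 ht₀0))
  have ht₁0 : 0 < t₁ := by
    rcases lt_or_eq_of_le ht₁mem.1 with h | h
    · exact h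
    · exfalso; rw [← h, hH0] at hM; linarith
  have ht₁ε : t₁ < ε := lt_of_le_of_lt ht₁mem.2 ht₀ε
  -- derivative bound on (0, t₁)
  have hderivbound : ∀ t ∈ Ioo (0:ℝ) t₁, H' t ≤ -R * C * M := by
    intro t ⟨ht0, htt₁⟩
    have htmem : t ∈ Icc (0:ℝ) ε := ⟨ht0.le, (htt₁.trans ht₁ε).le⟩
    have htIoo : t ∈ Ioo (0:ℝ) ε := ⟨ht0, htt₁.trans ht₁ε⟩
    have hsub' : Icc (0:ℝ) t ⊆ Icc 0 ε := Icc_subset_Icc le_rfl htmem.2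
    have hsub'' : Icc (0:ℝ) t ⊆ Icc 0 t₀ :=
      Icc_subset_Icc le_rfl (htt₁.le.trans ht₁mem.2)
    have hintHξ : IntervalIntegrable (fun s => H s * ξ s) MeasureTheory.volume 0 t := by
      apply ContinuousOn.intervalIntegrable
      rw [uIcc_of_le ht0.le]
      exact ((hHcont.mono hsub').mul (hξcont.mono hsub'))
    have hintξ : IntervalIntegrable (fun s => M * ξ s) MeasureTheory.volume 0 t := by
      apply ContinuousOn.intervalIntegrable
      rw [uIcc_of_le ht0.le]
      exact (continuousOn_const.mul (hξcont.mono hsub'))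
    have hmono : (∫ s in (0:ℝ)..t, H s * ξ s) ≤ ∫ s in (0:ℝ)..t, M * ξ s := by
      apply intervalIntegral.integral_mono_on ht0.le hintHξ hintξ
      intro s hs
      have hsM : H s ≤ M := ht₁max (hsub'' hs)
      have hsξ : 0 ≤ ξ s := hξnonneg s (hsub' hs)
      nlinarith
    have hφt : 0 < φ t := hφpos t htmem
    have hξint : (∫ s in (0:ℝ)..t, ξ s) ≤ 2 * C * φ t := by
      have := hbound t htmem
      rw [div_mul_eq_mul_div, one_mul, div_le_iff₀ hφt] at this
      linarith
    have h1 : (1 / φ t) * (∫ s in (0:ℝ)..t, H s * ξ s) ≤ 2 * C * M := by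
      have h2 : (∫ s in (0:ℝ)..t, M * ξ s) = M * ∫ s in (0:ℝ)..t, ξ s := by
        exact intervalIntegral.integral_const_mul M ξ
      have h3 : (∫ s in (0:ℝ)..t, H s * ξ s) ≤ M * (2 * C * φ t) := by
        rw [h2] at hmono
        nlinarith
      rw [div_mul_eq_mul_div, one_mul, div_le_iff₀ hφt]
      nlinarith
    have := hineq t htIoo
    nlinarith [this, h1]
  -- monotonicity of B*t - H t on [0, t₁]
  set B := -R * C * M with hB
  have hBpos : 0 < B := mul_pos (mul_pos (neg_pos.2 hR) hC) hMpos
  have hmonoG : MonotoneOn (fun u => B * u - H u) (Icc 0 t₁) := by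
    apply monotoneOn_of_deriv_nonneg (convex_Icc 0 t₁)
    · exact ((continuous_const.mul continuous_id).continuousOn).sub
        (hHcont.mono (Icc_subset_Icc le_rfl ht₁ε.le))
    · intro x hx
      rw [interior_Icc] at hx
      have hd : HasDerivAt (fun u => B * u - H u) (B - H' x)  x := by
        have := (hHderiv x ⟨hx.1, hx.2.trans ht₁ε⟩)
        have h := (((hasDerivAt_id x).const_mul B).sub this :
          HasDerivAt (fun u => B * u - H u) (B * 1 - H' x) x)
        rw [mul_one] at h; exact h
      exact hd.differentiableAt.differentiableWithinAt
    · intro x hx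
      rw [interior_Icc] at hx
      have hd : HasDerivAt (fun u => B * u - H u) (B - H' x) x := by
        have := (hHderiv x ⟨hx.1, hx.2.trans ht₁ε⟩)
        have h := (((hasDerivAt_id x).const_mul B).sub this :
          HasDerivAt (fun u => B * u - H u) (B * 1 - H' x) x)
        rw [mul_one] at h; exact h
      rw [hd.deriv]
      have := hderivbound x hx
      linarith
  have hkey := hmonoG (left_mem_Icc.2 ht₁0.le) (right_mem_Icc.2 ht₁0.le) ht₁0.le
  simp only [mul_zero, hH0, sub_zero, zero_sub, neg_le_sub_iff_le_add, zero_add] at hkey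
  -- hkey : M ≤ B * t₁  (roughly); conclude contradiction
  have hfin : M ≤ B * t₁ := by
    have : B * 0 - H 0 ≤ B * t₁ - H t₁ :=
      hmonoG (left_mem_Icc.2 ht₁0.le) (right_mem_Icc.2 ht₁0.le) ht₁0.le
    rw [hH0, mul_zero] at this; linarith
  have h5 : M < B * ε := lt_of_le_of_lt hfin (mul_lt_mul_of_pos_left ht₁ε hBpos)
  rw [hB] at h5
  nlinarith [mul_lt_mul_of_pos_right hCRε hMpos]
end

section
/- Let ε₀ > 0 and let R be any real number. Let H : [0,ε₀] → ℝ be continuously differentiable with H(0) = 0, and let φ, ξ : [0,ε₀] → ℝ be continuous functions with φ(t) > 0 and ξ(t) > 0 for all t ∈ [0,ε₀]. Suppose that H′(t)·φ(t) ≤ −(R/2)·∫₀ᵗ H(s)·ξ(s) ds for every t ∈ [0,ε₀]. Then there exists ε ∈ (0,ε₀] such that H(t) ≤ 0 for every t ∈ [0,ε). -/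
open Set intervalIntegral

/-- The Claim in the proof of Proposition 4.1 (all three cases of `R = inf R^M`):
if `H` is C¹ on `[0, ε₀]` with `H(0) = 0` and satisfies
`H′(t)·φ(t) ≤ −(R/2)·∫₀ᵗ H(s)·ξ(s) ds`, then `H ≤ 0` on `[0, ε)`
for some `ε ∈ (0, ε₀]`. -/
theorem stmt_2 (ε₀ R : ℝ) (hε₀ : 0 < ε₀)
    (H H' φ ξ : ℝ → ℝ)
    (hHderiv : ∀ t ∈ Icc 0 ε₀, HasDerivWithinAt H (H' t) (Icc 0 ε₀) t)
    (hH'cont : ContinuousOn H' (Icc 0 ε₀))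
    (hH0 : H 0 = 0)
    (hφcont : ContinuousOn φ (Icc 0 ε₀))
    (hξcont : ContinuousOn ξ (Icc 0 ε₀))
    (hφpos : ∀ t ∈ Icc 0 ε₀, 0 < φ t)
    (hξpos : ∀ t ∈ Icc 0 ε₀, 0 < ξ t)
    (hineq : ∀ t ∈ Icc 0 ε₀,
      H' t * φ t ≤ -(R / 2) * ∫ s in (0:ℝ)..t, H s * ξ s) :
    ∃ ε, 0 < ε ∧ ε ≤ ε₀ ∧ ∀ t ∈ Ico 0 ε, H t ≤ 0 := by
  have Hcont : ContinuousOn H (Icc 0 ε₀) := fun x hx =>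
    (hHderiv x hx).continuousWithinAt
  obtain ⟨p, hpmem, hpmin⟩ :=
    isCompact_Icc.exists_isMinOn ⟨0, left_mem_Icc.mpr hε₀.le⟩ hφcont
  obtain ⟨q, hqmem, hqmax⟩ :=
    isCompact_Icc.exists_isMaxOn ⟨0, left_mem_Icc.mpr hε₀.le⟩ hξcont
  set B := ξ q with hBdef
  have hBpos : 0 < B := hξpos q hqmem
  have hφp : 0 < φ p := hφpos p hpmem
  set K := |R| / (2 * φ p) with hKdef
  have hK0 : 0 ≤ K := div_nonneg (abs_nonneg R) (by linarith)
  have hKB : 0 < K * B + 1 := by nlinarith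
  refine ⟨min ε₀ (1 / (K * B + 1)), lt_min hε₀ (by positivity), min_le_left _ _, ?_⟩
  intro t ht
  by_contra hpos
  push_neg at hpos
  obtain ⟨ht0, htlt⟩ := ht
  have htε₀ : t < ε₀ := lt_of_lt_of_le htlt (min_le_left _ _)
  have htI : t ∈ Icc 0 ε₀ := ⟨ht0, htε₀.le⟩
  have hsub : Icc 0 t ⊆ Icc 0 ε₀ := Icc_subset_Icc le_rfl htε₀.le
  obtain ⟨m, hmmem, hmmax⟩ :=
    isCompact_Icc.exists_isMaxOn (f := fun x => |H x|) ⟨0, left_mem_Icc.mpr ht0⟩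
      ((Hcont.mono hsub).abs)
  set S := |H m| with hSdef
  have hSb : ∀ x ∈ Icc (0:ℝ) t, |H x| ≤ S := fun x hx => hmmax hx
  have hS0 : 0 < S := lt_of_lt_of_le hpos
    (le_trans (le_abs_self _) (hSb t (right_mem_Icc.mpr ht0)))
  -- bound on the integral
  have hu : ∀ r ∈ Icc (0:ℝ) t, |∫ s in (0:ℝ)..r, H s * ξ s| ≤ S * B * r := by
    intro r hr
    have hb : ∀ x ∈ Set.uIoc (0:ℝ) r, ‖H x * ξ x‖ ≤ S * B := by
      intro x hx
      rw [Set.uIoc_of_le hr.1] at hx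
      have hxI : x ∈ Icc (0:ℝ) t := ⟨hx.1.le, hx.2.trans hr.2⟩
      have hxE : x ∈ Icc (0:ℝ) ε₀ := hsub hxI
      have h1 : |H x| ≤ S := hSb x hxI
      have h2 : |ξ x| ≤ B := by
        rw [abs_of_pos (hξpos x hxE)]; exact hqmax hxE
      calc ‖H x * ξ x‖ = |H x| * |ξ x| := abs_mul _ _
        _ ≤ S * B := mul_le_mul h1 h2 (abs_nonneg _) hS0.le
    have := intervalIntegral.norm_integral_le_of_norm_le_const hb
    rw [Real.norm_eq_abs] at this
    calc |∫ s in (0:ℝ)..r, H s * ξ s| ≤ S * B * |r - 0| := this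
      _ = S * B * r := by rw [sub_zero, abs_of_nonneg hr.1]
  set D := K * (S * B * t) with hDdef
  have hSBt : 0 ≤ S * B * t := by positivity
  have hD0 : 0 ≤ D := mul_nonneg hK0 hSBt
  -- pointwise bound on the derivative
  have hH'le : ∀ r ∈ Icc (0:ℝ) t, H' r ≤ D := by
    intro r hr
    have hrE : r ∈ Icc (0:ℝ) ε₀ := hsub hr
    have h1 := hineq r hrE
    have hφr : 0 < φ r := hφpos r hrE
    have hφpr : φ p ≤ φ r := hpmin hrE
    have h2 : -(R/2) * ∫ s in (0:ℝ)..r, H s * ξ s ≤ |R| / 2 * (S * B * r) := by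
      calc -(R/2) * ∫ s in (0:ℝ)..r, H s * ξ s
          ≤ |(-(R/2)) * ∫ s in (0:ℝ)..r, H s * ξ s| := le_abs_self _
        _ = |R| / 2 * |∫ s in (0:ℝ)..r, H s * ξ s| := by
            rw [abs_mul, abs_neg, abs_div]; norm_num
        _ ≤ |R| / 2 * (S * B * r) :=
            mul_le_mul_of_nonneg_left (hu r hr) (by positivity)
    have hRK : |R| / 2 ≤ K * φ r := by
      rw [hKdef, div_mul_eq_mul_div, le_div_iff₀ (by linarith : (0:ℝ) < 2 * φ p)]
      nlinarith [abs_nonneg R]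
    have h3 : S * B * r ≤ S * B * t := mul_le_mul_of_nonneg_left hr.2 (by positivity)
    have h4 : H' r * φ r ≤ (K * (S * B * t)) * φ r := by
      have hint : (0:ℝ) ≤ |∫ s in (0:ℝ)..r, H s * ξ s| := abs_nonneg _
      have hSBr : 0 ≤ S * B * r := mul_nonneg (by positivity) hr.1
      calc H' r * φ r ≤ |R| / 2 * (S * B * r) := le_trans h1 h2
        _ ≤ (K * φ r) * (S * B * r) :=
            mul_le_mul_of_nonneg_right hRK hSBr
        _ ≤ (K * φ r) * (S * B * t) :=
            mul_le_mul_of_nonneg_left h3 (mul_nonneg hK0 hφr.le)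
        _ = (K * (S * B * t)) * φ r := by ring
    exact le_of_mul_le_mul_right h4 hφr
  -- `r ↦ D r - H r` is monotone on `[0, t]`
  have hmono : MonotoneOn (fun r => D * r - H r) (Icc 0 t) := by
    apply monotoneOn_of_deriv_nonneg (convex_Icc 0 t)
    · exact (continuousOn_const.mul continuousOn_id).sub (Hcont.mono hsub)
    · intro x hx
      rw [interior_Icc] at hx
      have hxE : x ∈ Icc (0:ℝ) ε₀ := ⟨hx.1.le, (hx.2.trans htε₀).le⟩
      have hnn : Icc (0:ℝ) ε₀ ∈ nhds x := Icc_mem_nhds hx.1 (hx.2.trans htε₀)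
      have hder : HasDerivAt H (H' x) x := (hHderiv x hxE).hasDerivAt hnn
      exact (((hasDerivAt_id x).const_mul D).sub hder).differentiableAt.differentiableWithinAt
    · intro x hx
      rw [interior_Icc] at hx
      have hxE : x ∈ Icc (0:ℝ) ε₀ := ⟨hx.1.le, (hx.2.trans htε₀).le⟩
      have hnn : Icc (0:ℝ) ε₀ ∈ nhds x := Icc_mem_nhds hx.1 (hx.2.trans htε₀)
      have hder : HasDerivAt H (H' x) x := (hHderiv x hxE).hasDerivAt hnn
      have hg : HasDerivAt (fun r => D * r - H r) (D * 1 - H' x) x :=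
        ((hasDerivAt_id x).const_mul D).sub hder
      rw [hg.deriv]
      have := hH'le x ⟨hx.1.le, hx.2.le⟩
      linarith
  -- the key bound `|H s| ≤ D * t` on `[0, t]`
  have habs : ∀ s ∈ Icc (0:ℝ) t, |H s| ≤ D * t := by
    intro s hs
    rcases le_or_gt 0 (H s) with h | h
    · rw [abs_of_nonneg h]
      have h1 := hmono (left_mem_Icc.mpr ht0) hs hs.1
      simp only [mul_zero, hH0, sub_zero] at h1
      have h2 : D * s ≤ D * t := mul_le_mul_of_nonneg_left hs.2 hD0
      linarith
    · -- take the first point `z ≥ s` with `H z ≥ 0`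
      have hTcl : IsClosed (Icc s t ∩ H ⁻¹' Ici 0) :=
        ((Hcont.mono hsub).mono (Icc_subset_Icc hs.1 le_rfl)).preimage_isClosed_of_isClosed
          isClosed_Icc isClosed_Ici
      have hTne : (Icc s t ∩ H ⁻¹' Ici 0).Nonempty :=
        ⟨t, right_mem_Icc.mpr hs.2, hpos.le⟩
      have hTbdd : BddBelow (Icc s t ∩ H ⁻¹' Ici 0) :=
        (bddBelow_Icc).mono (inter_subset_left)
      obtain ⟨hz1, hz2⟩ := hTcl.csInf_mem hTne hTbdd
      set z := sInf (Icc s t ∩ H ⁻¹' Ici 0)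
      have hzI : z ∈ Icc (0:ℝ) t := ⟨hs.1.trans hz1.1, hz1.2⟩
      have h1 := hmono hs hzI hz1.1
      -- D * s - H s ≤ D * z - H z
      have hz0 : (0:ℝ) ≤ H z := hz2
      rw [abs_of_neg h]
      simp only at h1
      have h2 : D * z ≤ D * t := mul_le_mul_of_nonneg_left hzI.2 hD0
      have h3 : 0 ≤ D * s := mul_nonneg hD0 hs.1
      linarith
  -- conclude the contradiction
  have hfin : S ≤ D * t := habs m hmmem
  have h1t : t < 1 / (K * B + 1) := lt_of_lt_of_le htlt (min_le_right _ _)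
  have h1t' : t * (K * B + 1) < 1 := (lt_div_iff₀ hKB).mp h1t
  have hsmall : K * B * t ^ 2 < 1 := by nlinarith [mul_nonneg (mul_nonneg hK0 hBpos.le) ht0]
  have : D * t = (K * B * t ^ 2) * S := by rw [hDdef]; ring
  nlinarith [mul_lt_mul_of_pos_right hsmall hS0]
end

section
/- Let ε₀ > 0 and let R be any real number. Let H : [−ε₀,0] → ℝ be continuously differentiable with H(0) = 0, and let φ, ξ : [−ε₀,0] → ℝ be continuous functions with φ(t) > 0 and ξ(t) > 0 for all t ∈ [−ε₀,0]. Suppose that H′(t)·φ(t) ≤ −(R/2)·∫₀ᵗ H(s)·ξ(s) ds for every t ∈ [−ε₀,0], where for t < 0 the integral ∫₀ᵗ denotes the signed integral (so ∫₀ᵗ f = −∫ₜ⁰ f). Then there exists ε ∈ (0,ε₀] such that H(t) ≥ 0 for every t ∈ (−ε,0]. -/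
open Set intervalIntegral

/-- The mirrored Claim (for negative parameter values) in the proof of
Proposition 4.1: if `H` is C¹ on `[−ε₀, 0]` with `H(0) = 0` and satisfies
`H′(t)·φ(t) ≤ −(R/2)·∫₀ᵗ H(s)·ξ(s) ds` (signed integral), then `H ≥ 0`
on `(−ε, 0]` for some `ε ∈ (0, ε₀]`. -/
theorem stmt_3 (ε₀ R : ℝ) (hε₀ : 0 < ε₀)
    (H H' φ ξ : ℝ → ℝ)
    (hHderiv : ∀ t ∈ Icc (-ε₀) 0, HasDerivWithinAt H (H' t) (Icc (-ε₀) 0) t)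
    (hH'cont : ContinuousOn H' (Icc (-ε₀) 0))
    (hH0 : H 0 = 0)
    (hφcont : ContinuousOn φ (Icc (-ε₀) 0))
    (hξcont : ContinuousOn ξ (Icc (-ε₀) 0))
    (hφpos : ∀ t ∈ Icc (-ε₀) 0, 0 < φ t)
    (hξpos : ∀ t ∈ Icc (-ε₀) 0, 0 < ξ t)
    (hineq : ∀ t ∈ Icc (-ε₀) 0,
      H' t * φ t ≤ -(R / 2) * ∫ s in (0:ℝ)..t, H s * ξ s) :
    ∃ ε, 0 < ε ∧ ε ≤ ε₀ ∧ ∀ t ∈ Ioc (-ε) 0, 0 ≤ H t := by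
  have hne : (Icc (-ε₀) (0:ℝ)).Nonempty := ⟨0, by constructor <;> linarith⟩
  obtain ⟨xm, hxm, hmmin⟩ := isCompact_Icc.exists_isMinOn hne hφcont
  obtain ⟨xΞ, hxΞ, hΞmax⟩ := isCompact_Icc.exists_isMaxOn hne hξcont
  set m := φ xm with hmdef
  set Ξ := ξ xΞ with hΞdef
  have hm0 : 0 < m := hφpos xm hxm
  have hΞ0 : 0 < Ξ := hξpos xΞ hxΞ
  have hmlb : ∀ t ∈ Icc (-ε₀) (0:ℝ), m ≤ φ t := fun t ht => hmmin ht
  have hΞub : ∀ t ∈ Icc (-ε₀) (0:ℝ), ξ t ≤ Ξ := fun t ht => hΞmax ht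
  clear_value m Ξ
  set C₂ := |R| / 2 * Ξ / m with hC2def
  have hC2nonneg : 0 ≤ C₂ := by positivity
  set δ := min ε₀ (min 1 (1 / (C₂ + 1))) with hδdef
  have hδpos : 0 < δ := by
    apply lt_min hε₀
    apply lt_min one_pos
    positivity
  have hδε₀ : δ ≤ ε₀ := min_le_left _ _
  have hδ1 : δ ≤ 1 := le_trans (min_le_right _ _) (min_le_left _ _)
  have hδC : δ ≤ 1 / (C₂ + 1) := le_trans (min_le_right _ _) (min_le_right _ _)
  have hCδδ : C₂ * δ * δ < 1 := by
    have h1 : δ * (C₂ + 1) ≤ 1 := by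
      have := mul_le_mul_of_nonneg_right hδC (le_of_lt (by positivity : (0:ℝ) < C₂ + 1))
      rwa [one_div, inv_mul_cancel₀ (by positivity : (C₂:ℝ) + 1 ≠ 0)] at this
    nlinarith [mul_nonneg hC2nonneg hδpos.le]
  clear_value C₂ δ
  refine ⟨δ, hδpos, hδε₀, ?_⟩
  rintro t₀ ⟨ht₀l, ht₀r⟩
  by_contra hneg
  push_neg at hneg
  have hsub : Icc t₀ (0:ℝ) ⊆ Icc (-ε₀) 0 := Icc_subset_Icc (by linarith) le_rfl
  have hHcont : ContinuousOn H (Icc (-ε₀) 0) :=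
    fun t ht => (hHderiv t ht).continuousWithinAt
  have hne2 : (Icc t₀ (0:ℝ)).Nonempty := ⟨0, by constructor <;> linarith⟩
  have habs : ContinuousOn (fun t => |H t|) (Icc t₀ 0) :=
    continuous_abs.comp_continuousOn (hHcont.mono hsub)
  obtain ⟨u₀, hu₀, hmax⟩ := isCompact_Icc.exists_isMaxOn hne2 habs
  set M := |H u₀| with hMdef
  have hM0 : 0 < M :=
    lt_of_lt_of_le (abs_pos.mpr (ne_of_lt hneg)) (hmax ⟨le_rfl, ht₀r⟩)
  have hMub : ∀ x ∈ Icc t₀ (0:ℝ), |H x| ≤ M := fun x hx => hmax hx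
  clear_value M
  set B := |R| / 2 * (M * Ξ * δ) / m with hBdef
  have hBnonneg : 0 ≤ B := by positivity
  clear_value B
  -- H' is bounded above by B on Icc t₀ 0
  have hH'le : ∀ s ∈ Icc t₀ (0:ℝ), H' s ≤ B := by
    intro s hs
    have hs' : s ∈ Icc (-ε₀) 0 := hsub hs
    have hint : ‖∫ x in (0:ℝ)..s, H x * ξ x‖ ≤ M * Ξ * |s - 0| := by
      apply intervalIntegral.norm_integral_le_of_norm_le_const
      intro x hx
      have hx' : x ∈ Ioc s (0:ℝ) := by
        rcases le_or_gt (0:ℝ) s with h | h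
        · have : s = 0 := le_antisymm hs.2 h
          simp [this, uIoc] at hx
        · rwa [uIoc_of_ge hs.2] at hx
      have hxI : x ∈ Icc t₀ (0:ℝ) := ⟨le_trans hs.1 hx'.1.le, hx'.2⟩
      have hxI' : x ∈ Icc (-ε₀) (0:ℝ) := hsub hxI
      have h1 : |H x| ≤ M := hMub x hxI
      have h2 : |ξ x| ≤ Ξ := by
        rw [abs_of_pos (hξpos x hxI')]; exact hΞub x hxI'
      calc ‖H x * ξ x‖ = |H x| * |ξ x| := abs_mul _ _
        _ ≤ M * Ξ := mul_le_mul h1 h2 (abs_nonneg _) (le_trans (abs_nonneg _) h1)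
    have hsδ : |s - 0| ≤ δ := by
      rw [sub_zero, abs_of_nonpos hs.2]
      linarith [hs.1]
    have hK : -(R / 2) * ∫ x in (0:ℝ)..s, H x * ξ x ≤ |R| / 2 * (M * Ξ * δ) := by
      calc -(R / 2) * ∫ x in (0:ℝ)..s, H x * ξ x
          ≤ |(-(R / 2)) * ∫ x in (0:ℝ)..s, H x * ξ x| := le_abs_self _
        _ = |R| / 2 * |∫ x in (0:ℝ)..s, H x * ξ x| := by
            rw [abs_mul, abs_neg, abs_div]; simp
        _ ≤ |R| / 2 * (M * Ξ * δ) := by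
            apply mul_le_mul_of_nonneg_left _ (by positivity)
            calc |∫ x in (0:ℝ)..s, H x * ξ x| ≤ M * Ξ * |s - 0| := hint
              _ ≤ M * Ξ * δ := mul_le_mul_of_nonneg_left hsδ (by positivity)
    have hmain : H' s * φ s ≤ |R| / 2 * (M * Ξ * δ) := le_trans (hineq s hs') hK
    have hφs : m ≤ φ s := hmlb s hs'
    have hRHS : (0:ℝ) ≤ |R| / 2 * (M * Ξ * δ) := by positivity
    rw [hBdef, le_div_iff₀ hm0]
    rcases le_or_gt (H' s) 0 with h | h
    · nlinarith [mul_nonneg (neg_nonneg.mpr h) hm0.le]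
    · nlinarith [mul_le_mul_of_nonneg_left hφs h.le]
  -- the function B*u - H u is monotone on Icc t₀ 0
  have hmono : MonotoneOn (fun u => B * u - H u) (Icc t₀ 0) := by
    apply monotoneOn_of_deriv_nonneg (convex_Icc _ _)
    · exact (continuousOn_const.mul continuousOn_id).sub (hHcont.mono hsub)
    · intro x hx
      rw [interior_Icc] at hx
      have hxI : x ∈ Icc (-ε₀) (0:ℝ) := hsub ⟨hx.1.le, hx.2.le⟩
      have hd : HasDerivAt H (H' x) x :=
        (hHderiv x hxI).hasDerivAt (Icc_mem_nhds (by linarith [hx.1]) hx.2)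
      exact (((hasDerivAt_id x).const_mul B).sub hd).differentiableAt.differentiableWithinAt
    · intro x hx
      rw [interior_Icc] at hx
      have hxI : x ∈ Icc (-ε₀) (0:ℝ) := hsub ⟨hx.1.le, hx.2.le⟩
      have hd : HasDerivAt H (H' x) x :=
        (hHderiv x hxI).hasDerivAt (Icc_mem_nhds (by linarith [hx.1]) hx.2)
      have hG : HasDerivAt (fun u => B * u - H u) (B * 1 - H' x) x :=
        ((hasDerivAt_id x).const_mul B).sub hd
      rw [hG.deriv]
      have := hH'le x ⟨hx.1.le, hx.2.le⟩
      linarith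
  -- conclude |H u| ≤ B * δ on Icc t₀ 0
  have hbound : ∀ u ∈ Icc t₀ (0:ℝ), |H u| ≤ B * δ := by
    intro u hu
    have h0mem : (0:ℝ) ∈ Icc t₀ (0:ℝ) := ⟨ht₀r, le_rfl⟩
    have ht₀mem : t₀ ∈ Icc t₀ (0:ℝ) := ⟨le_rfl, ht₀r⟩
    have k1 : B * u - H u ≤ B * 0 - H 0 := hmono hu h0mem hu.2
    have k2 : B * t₀ - H t₀ ≤ B * u - H u := hmono ht₀mem hu hu.1
    rw [hH0] at k1
    have huδ : -u ≤ δ := by linarith [hu.1]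
    have hut₀ : u - t₀ ≤ δ := by linarith [hu.2]
    rw [abs_le]
    constructor
    · -- -(B*δ) ≤ H u, i.e. -H u ≤ B*δ
      nlinarith [mul_le_mul_of_nonneg_left huδ hBnonneg]
    · -- H u ≤ B*δ
      nlinarith [mul_le_mul_of_nonneg_left hut₀ hBnonneg]
  have hMle : M ≤ B * δ := by rw [hMdef]; exact hbound u₀ hu₀
  have hBδ : B * δ = M * (C₂ * δ * δ) := by
    rw [hBdef, hC2def]; field_simp
  rw [hBδ] at hMle
  have hlt : M * (C₂ * δ * δ) < M * 1 := mul_lt_mul_of_pos_left hCδδ hM0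
  linarith
end

section
/- Let ε₀ > 0 and let R be any real number. Let A, H : [0,ε₀] → ℝ be continuously differentiable with H(0) = 0, and let φ, ξ : [0,ε₀] → ℝ be continuous functions with φ(t) > 0 and ξ(t) > 0 for all t ∈ [0,ε₀]. Suppose that A′(t) = H(t)·ξ(t) for every t ∈ [0,ε₀], and that H′(t)·φ(t) ≤ (R/2)·(A(0) − A(t)) for every t ∈ [0,ε₀]. Then there exists ε ∈ (0,ε₀] such that A(t) ≤ A(0) for every t ∈ [0,ε). -/
open Set

/-- If `f` has derivative `f' ≤ C` on `[a,b]`, then `f b - f a ≤ C * (b - a)`. -/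
lemma deriv_le_slope_aux {f f' : ℝ → ℝ} {a b C : ℝ} (hab : a ≤ b)
    (hf : ∀ s ∈ Icc a b, HasDerivWithinAt f (f' s) (Icc a b) s)
    (hC : ∀ s ∈ Icc a b, f' s ≤ C) : f b - f a ≤ C * (b - a) := by
  have hmono : MonotoneOn (fun s => C * s - f s) (Icc a b) := by
    apply monotoneOn_of_hasDerivWithinAt_nonneg (f' := fun s => C - f' s) (convex_Icc a b)
    · exact (continuousOn_const.mul continuousOn_id).sub
        (fun s hs => (hf s hs).continuousWithinAt)
    · intro x hx
      have hx' : x ∈ Icc a b := interior_subset hx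
      have h1 : HasDerivWithinAt (fun s => C * s) (C * 1) (interior (Icc a b)) x :=
        (hasDerivWithinAt_id x _).const_mul C
      have h2 := (hf x hx').mono (interior_subset : interior (Icc a b) ⊆ Icc a b)
      have h3 := h1.sub h2
      rw [mul_one] at h3
      exact h3
    · intro x hx
      have hx' : x ∈ Icc a b := interior_subset hx
      have := hC x hx'
      linarith
  have h := hmono (left_mem_Icc.2 hab) (right_mem_Icc.2 hab) hab
  simp only at h
  linarith

/-- Analytic core of the right-hand half of Proposition 4.1: if `A` and `H`
are C¹ on `[0, ε₀]`, `H(0) = 0`, `A′(t) = H(t)·ξ(t)` (first variation of area)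
and `H′(t)·φ(t) ≤ (R/2)·(A(0) − A(t))` (inequality (8)), then `A(t) ≤ A(0)`
on `[0, ε)` for some `ε ∈ (0, ε₀]`. -/
theorem stmt_4 (ε₀ R : ℝ) (hε₀ : 0 < ε₀)
    (A A' H H' φ ξ : ℝ → ℝ)
    (hAderiv : ∀ t ∈ Icc 0 ε₀, HasDerivWithinAt A (A' t) (Icc 0 ε₀) t)
    (hA'cont : ContinuousOn A' (Icc 0 ε₀))
    (hHderiv : ∀ t ∈ Icc 0 ε₀, HasDerivWithinAt H (H' t) (Icc 0 ε₀) t)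
    (hH'cont : ContinuousOn H' (Icc 0 ε₀))
    (hH0 : H 0 = 0)
    (hφcont : ContinuousOn φ (Icc 0 ε₀))
    (hξcont : ContinuousOn ξ (Icc 0 ε₀))
    (hφpos : ∀ t ∈ Icc 0 ε₀, 0 < φ t)
    (hξpos : ∀ t ∈ Icc 0 ε₀, 0 < ξ t)
    (hfirstvar : ∀ t ∈ Icc 0 ε₀, A' t = H t * ξ t)
    (hineq : ∀ t ∈ Icc 0 ε₀, H' t * φ t ≤ (R / 2) * (A 0 - A t)) :
    ∃ ε, 0 < ε ∧ ε ≤ ε₀ ∧ ∀ t ∈ Ico 0 ε, A t ≤ A 0 := by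
  have h0mem : (0 : ℝ) ∈ Icc 0 ε₀ := left_mem_Icc.2 hε₀.le
  have hAcont : ContinuousOn A (Icc 0 ε₀) := fun t ht => (hAderiv t ht).continuousWithinAt
  have hHcont : ContinuousOn H (Icc 0 ε₀) := fun t ht => (hHderiv t ht).continuousWithinAt
  -- minimum of φ and maximum of ξ
  obtain ⟨a, haI, ham⟩ := isCompact_Icc.exists_isMinOn ⟨0, h0mem⟩ hφcont
  obtain ⟨b, hbI, hbM⟩ := isCompact_Icc.exists_isMaxOn ⟨0, h0mem⟩ hξcont
  set m := φ a with hm_def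
  set M := ξ b with hM_def
  have hm : 0 < m := hφpos a haI
  have hM : 0 < M := hξpos b hbI
  set K := |R| / (2 * m) with hK_def
  have hK : 0 ≤ K := div_nonneg (abs_nonneg R) (by linarith)
  -- choice of ε
  set ε := min ε₀ (Real.sqrt (1 / (2 * K * M + 1))) with hε_def
  have hKM1 : (0:ℝ) < 2 * K * M + 1 := by positivity
  have hεpos : 0 < ε := lt_min hε₀ (Real.sqrt_pos.2 (by positivity))
  have hεle : ε ≤ ε₀ := min_le_left _ _
  refine ⟨ε, hεpos, hεle, ?_⟩
  -- the key smallness property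
  have hsmall : ∀ τ : ℝ, 0 ≤ τ → τ < ε → K * M * τ ^ 2 ≤ 1 / 2 := by
    intro τ hτ0 hτε
    have h1 : τ ≤ Real.sqrt (1 / (2 * K * M + 1)) := le_of_lt (lt_of_lt_of_le hτε (min_le_right _ _))
    have h2 : τ ^ 2 ≤ 1 / (2 * K * M + 1) := by
      have := Real.sq_sqrt (le_of_lt (show (0:ℝ) < 1 / (2 * K * M + 1) by positivity))
      nlinarith [Real.sqrt_nonneg (1 / (2 * K * M + 1))]
    have hKM : 0 ≤ K * M := mul_nonneg hK hM.le
    rw [le_div_iff₀ hKM1] at h2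
    nlinarith
  -- pointwise bound on H'
  have hH'le : ∀ s ∈ Icc 0 ε₀, H' s ≤ K * |A s - A 0| := by
    intro s hs
    have hφs : 0 < φ s := hφpos s hs
    have hms : m ≤ φ s := ham hs
    have h1 : H' s * φ s ≤ (R / 2) * (A 0 - A s) := hineq s hs
    have h2 : (R / 2) * (A 0 - A s) ≤ (|R| / 2) * |A s - A 0| := by
      calc (R / 2) * (A 0 - A s) ≤ |(R / 2) * (A 0 - A s)| := le_abs_self _
        _ = (|R| / 2) * |A s - A 0| := by
            rw [abs_mul, abs_div, abs_sub_comm]; simp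
    have h3 : (|R| / 2) * |A s - A 0| = K * m * |A s - A 0| := by
      rw [hK_def]; field_simp
    have h4 : K * m * |A s - A 0| ≤ K * |A s - A 0| * φ s := by
      have : K * |A s - A 0| * m ≤ K * |A s - A 0| * φ s :=
        mul_le_mul_of_nonneg_left hms (mul_nonneg hK (abs_nonneg _))
      linarith [this]
    have : H' s * φ s ≤ K * |A s - A 0| * φ s := by linarith
    exact le_of_mul_le_mul_right this hφs
  -- main argument
  intro t₁ ht₁
  obtain ⟨ht₁0, ht₁ε⟩ := ht₁
  by_contra hcon
  push_neg at hcon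
  have ht₁I : t₁ ∈ Icc 0 ε₀ := ⟨ht₁0, le_trans ht₁ε.le hεle⟩
  have hsub1 : Icc 0 t₁ ⊆ Icc 0 ε₀ := Icc_subset_Icc le_rfl ht₁I.2
  -- τ : argmax of A on [0, t₁]
  obtain ⟨τ, hτmem, hτmax⟩ := isCompact_Icc.exists_isMaxOn ⟨0, left_mem_Icc.2 ht₁0⟩
    (hAcont.mono hsub1)
  have hτI : τ ∈ Icc 0 ε₀ := hsub1 hτmem
  have hτε : τ < ε := lt_of_le_of_lt hτmem.2 ht₁ε
  have hsub2 : Icc 0 τ ⊆ Icc 0 ε₀ := Icc_subset_Icc le_rfl hτI.2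
  have hsub2' : Icc 0 τ ⊆ Icc 0 t₁ := Icc_subset_Icc le_rfl hτmem.2
  -- σ : argmin of A on [0, τ]
  obtain ⟨σ, hσmem, hσmin⟩ := isCompact_Icc.exists_isMinOn ⟨0, left_mem_Icc.2 hτmem.1⟩
    (hAcont.mono hsub2)
  set W := max (A τ - A 0) (A 0 - A σ) with hW_def
  have hAτ : A t₁ ≤ A τ := hτmax (right_mem_Icc.2 ht₁0)
  have hW1 : A τ - A 0 ≤ W := le_max_left _ _
  have hW2 : A 0 - A σ ≤ W := le_max_right _ _
  have hWpos : 0 < W := lt_of_lt_of_le (by linarith [hcon]) hW1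
  -- |A r - A 0| ≤ W for r ∈ [0, τ]
  have habs : ∀ r ∈ Icc 0 τ, |A r - A 0| ≤ W := by
    intro r hr
    have h1 : A r ≤ A τ := hτmax (hsub2' hr)
    have h2 : A σ ≤ A r := hσmin hr
    rw [abs_le]
    constructor <;> [linarith; linarith]
  -- H s ≤ K * W * τ for s ∈ [0, τ]
  have hHbound : ∀ s ∈ Icc 0 τ, H s ≤ K * W * τ := by
    intro s hs
    have hsI : Icc 0 s ⊆ Icc 0 ε₀ := Icc_subset_Icc le_rfl (le_trans hs.2 hτI.2)
    have hsub3 : Icc 0 s ⊆ Icc 0 τ := Icc_subset_Icc le_rfl hs.2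
    have hstep : H s - H 0 ≤ (K * W) * (s - 0) := by
      apply deriv_le_slope_aux hs.1
      · intro r hr; exact (hHderiv r (hsI hr)).mono hsI
      · intro r hr
        calc H' r ≤ K * |A r - A 0| := hH'le r (hsI hr)
          _ ≤ K * W := mul_le_mul_of_nonneg_left (habs r (hsub3 hr)) hK
    rw [hH0] at hstep
    have : K * W * s ≤ K * W * τ :=
      mul_le_mul_of_nonneg_left hs.2 (mul_nonneg hK hWpos.le)
    linarith
  -- A' s ≤ K * M * τ * W for s ∈ [0, τ]
  have hA'bound : ∀ s ∈ Icc 0 τ, A' s ≤ K * M * τ * W := by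
    intro s hs
    have hsI : s ∈ Icc 0 ε₀ := hsub2 hs
    rw [hfirstvar s hsI]
    have hξs : 0 < ξ s := hξpos s hsI
    have hξM : ξ s ≤ M := hbM hsI
    have hHs := hHbound s hs
    rcases le_or_gt (H s) 0 with h | h
    · have : H s * ξ s ≤ 0 := mul_nonpos_of_nonpos_of_nonneg h hξs.le
      have : (0:ℝ) ≤ K * M * τ * W := by
        have hτ0 : 0 ≤ τ := hτmem.1
        positivity
      linarith
    · calc H s * ξ s ≤ (K * W * τ) * M := by
            apply mul_le_mul hHs hξM hξs.le
            have hτ0 : 0 ≤ τ := hτmem.1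
            positivity
        _ = K * M * τ * W := by ring
  -- conclude : A τ - A σ ≤ K*M*τ*W*(τ - σ) ≤ K*M*τ²*W ≤ W/2
  have hστ : σ ≤ τ := hσmem.2
  have hsubστ : Icc σ τ ⊆ Icc 0 τ := Icc_subset_Icc hσmem.1 le_rfl
  have hfin : A τ - A σ ≤ (K * M * τ * W) * (τ - σ) := by
    apply deriv_le_slope_aux hστ
    · intro r hr; exact (hAderiv r (hsub2 (hsubστ hr))).mono (fun x hx => hsub2 (hsubστ hx))
    · intro r hr; exact hA'bound r (hsubστ hr)
  have hτ2 : (K * M * τ * W) * (τ - σ) ≤ K * M * τ ^ 2 * W := by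
    have h1 : τ - σ ≤ τ := by linarith [hσmem.1]
    have h2 : 0 ≤ K * M * τ * W := by
      have hτ0 : 0 ≤ τ := hτmem.1
      positivity
    nlinarith [hσmem.1, hτmem.1, mul_nonneg (mul_nonneg hK hM.le) hτmem.1]
  have hhalf : K * M * τ ^ 2 * W ≤ (1 / 2) * W := by
    have := hsmall τ hτmem.1 hτε
    nlinarith
  -- but A τ - A σ ≥ W since A τ - A 0 > 0 and A 0 - A σ ≥ 0
  have hAσ0 : A σ ≤ A 0 := hσmin (left_mem_Icc.2 hτmem.1)
  have hge : W ≤ A τ - A σ := by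
    rw [hW_def]
    rcases max_cases (A τ - A 0) (A 0 - A σ) with ⟨h, _⟩ | ⟨h, _⟩ <;> rw [h] <;> linarith [hcon, hAτ]
  linarith
end

section
/- Let ε₀ > 0 and let R be any real number. Let A, H : (−ε₀,ε₀) → ℝ be continuously differentiable with H(0) = 0, and let φ, ξ : (−ε₀,ε₀) → ℝ be continuous functions with φ(t) > 0 and ξ(t) > 0 for all t ∈ (−ε₀,ε₀). Suppose that A′(t) = H(t)·ξ(t) for every t ∈ (−ε₀,ε₀), and that H′(t)·φ(t) ≤ (R/2)·(A(0) − A(t)) for every t ∈ (−ε₀,ε₀). Then there exists ε ∈ (0,ε₀] such that A(t) ≤ A(0) for every t ∈ (−ε,ε). -/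
set_option maxHeartbeats 1000000


open Set

lemma aux_one_side (ε₀ R : ℝ) (hε₀ : 0 < ε₀)
    (A A' H H' φ ξ : ℝ → ℝ)
    (hAderiv : ∀ t ∈ Ioo (-ε₀) ε₀, HasDerivAt A (A' t) t)
    (hHderiv : ∀ t ∈ Ioo (-ε₀) ε₀, HasDerivAt H (H' t) t)
    (hH0 : H 0 = 0)
    (hφcont : ContinuousOn φ (Ioo (-ε₀) ε₀))
    (hξcont : ContinuousOn ξ (Ioo (-ε₀) ε₀))
    (hφpos : ∀ t ∈ Ioo (-ε₀) ε₀, 0 < φ t)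
    (hξpos : ∀ t ∈ Ioo (-ε₀) ε₀, 0 < ξ t)
    (hfirstvar : ∀ t ∈ Ioo (-ε₀) ε₀, A' t = H t * ξ t)
    (hineq : ∀ t ∈ Ioo (-ε₀) ε₀, H' t * φ t ≤ (R / 2) * (A 0 - A t)) :
    ∃ ε, 0 < ε ∧ ε ≤ ε₀ ∧ ∀ t, 0 ≤ t → t < ε → A t ≤ A 0 := by
  have hIsub : Icc (-(ε₀/2)) (ε₀/2) ⊆ Ioo (-ε₀) ε₀ := by
    intro x hx
    exact ⟨by linarith [hx.1], by linarith [hx.2]⟩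
  have hInon : (Icc (-(ε₀/2)) (ε₀/2)).Nonempty := ⟨0, by constructor <;> linarith⟩
  obtain ⟨p, hpI, hpmin⟩ := isCompact_Icc.exists_isMinOn hInon (hφcont.mono hIsub)
  obtain ⟨q, hqI, hqmax⟩ := isCompact_Icc.exists_isMaxOn hInon (hξcont.mono hIsub)
  set K := ξ q with hKdef
  have hKpos : 0 < K := hξpos q (hIsub hqI)
  have hφp : 0 < φ p := hφpos p (hIsub hpI)
  set c := |R| / 2 / φ p with hcdef
  have hc0 : 0 ≤ c := by positivity
  have hKc1 : 0 < K * c + 1 := by positivity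
  set ε := min (ε₀/2) (1/(K*c+1)) with hεdef
  have hεpos : 0 < ε := lt_min (by linarith) (by positivity)
  have hεhalf : ε ≤ ε₀/2 := min_le_left _ _
  have hεle : ε ≤ ε₀ := by linarith
  have h2 : ε ≤ 1/(K*c+1) := min_le_right _ _
  have h3 : ε * (K*c+1) ≤ 1 := by
    rw [← le_div_iff₀ hKc1]; exact h2
  have hε1 : ε ≤ 1 := by nlinarith [mul_nonneg (mul_nonneg hKpos.le hc0) hεpos.le]
  have hsmall : K * c * (ε * ε) < 1 := by
    nlinarith [mul_nonneg (mul_nonneg hKpos.le hc0) hεpos.le, mul_pos hεpos hεpos]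
  -- pointwise bound on H'
  have hH'bd : ∀ N : ℝ, 0 ≤ N → ∀ r ∈ Icc (-(ε₀/2)) (ε₀/2), |A 0 - A r| ≤ N →
      H' r ≤ c * N := by
    intro N hN0 r hrI hrN
    have hrO := hIsub hrI
    have hφr : 0 < φ r := hφpos r hrO
    have h1 : H' r * φ r ≤ |R| / 2 * N := by
      calc H' r * φ r ≤ R/2 * (A 0 - A r) := hineq r hrO
        _ ≤ |R/2 * (A 0 - A r)| := le_abs_self _
        _ = |R|/2 * |A 0 - A r| := by rw [abs_mul, abs_div, abs_two]
        _ ≤ |R|/2 * N := by gcongr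
    have h2' : H' r ≤ (|R|/2 * N) / φ r := (le_div_iff₀ hφr).mpr h1
    have h3' : (|R|/2 * N) / φ r ≤ (|R|/2 * N) / φ p :=
      div_le_div_of_nonneg_left (by positivity) hφp (hpmin hrI)
    have h4' : (|R|/2 * N) / φ p = c * N := by rw [hcdef]; ring
    linarith
  have hAcont : ContinuousOn A (Ioo (-ε₀) ε₀) := fun t ht =>
    (hAderiv t ht).continuousAt.continuousWithinAt
  have hHcont : ContinuousOn H (Ioo (-ε₀) ε₀) := fun t ht =>
    (hHderiv t ht).continuousAt.continuousWithinAt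
  refine ⟨ε, hεpos, hεle, ?_⟩
  intro t₀ ht₀0 ht₀ε
  by_contra hbad
  push_neg at hbad
  have hsubI : Icc 0 t₀ ⊆ Icc (-(ε₀/2)) (ε₀/2) := by
    intro x hx
    constructor
    · linarith [hx.1]
    · linarith [hx.2]
  have hsubO : Icc 0 t₀ ⊆ Ioo (-ε₀) ε₀ := fun x hx => hIsub (hsubI hx)
  have hucont : ContinuousOn (fun t => A 0 - A t) (Icc 0 t₀) :=
    continuousOn_const.sub (hAcont.mono hsubO)
  have hnon : (Icc 0 t₀).Nonempty := ⟨0, le_refl 0, ht₀0⟩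
  obtain ⟨τ, hτmem, hτmin⟩ := isCompact_Icc.exists_isMinOn hnon hucont
  have hτ0 : 0 ≤ τ := hτmem.1
  have hττ : τ ≤ t₀ := hτmem.2
  set m := A 0 - A τ with hmdef
  have hm : m < 0 := by
    have h : A 0 - A τ ≤ A 0 - A t₀ := hτmin (⟨ht₀0, le_refl t₀⟩ : t₀ ∈ Icc 0 t₀)
    simp only [hmdef]
    linarith
  have hsubτ : Icc 0 τ ⊆ Icc 0 t₀ := Icc_subset_Icc_right hττ
  obtain ⟨σ, hσmem, hσmax⟩ := isCompact_Icc.exists_isMaxOn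
    (⟨0, le_refl 0, hτ0⟩ : (Icc 0 τ).Nonempty) (hucont.mono hsubτ)
  have hσ0 : 0 ≤ σ := hσmem.1
  have hστ : σ ≤ τ := hσmem.2
  set M := A 0 - A σ with hMdef
  have hM0 : 0 ≤ M := by
    have h : A 0 - A 0 ≤ A 0 - A σ := hσmax (⟨le_refl 0, hτ0⟩ : (0:ℝ) ∈ Icc 0 τ)
    simp only [hMdef]
    linarith
  set N := max M (-m) with hNdef
  have hN0 : 0 ≤ N := le_trans hM0 (le_max_left _ _)
  have hNle : N ≤ M - m := by
    apply max_le <;> linarith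
  have huN : ∀ r ∈ Icc 0 τ, |A 0 - A r| ≤ N := by
    intro r hr
    rw [abs_le]
    constructor
    · have h1 : A 0 - A τ ≤ A 0 - A r := hτmin (hsubτ hr)
      have h2' : -m ≤ N := le_max_right _ _
      simp only [hmdef] at h2'
      linarith
    · have h1 : A 0 - A r ≤ A 0 - A σ := hσmax hr
      have h2' : M ≤ N := le_max_left _ _
      simp only [hMdef] at h2'
      linarith
  -- bound H s ≤ c*N*s on [0, τ]
  have hHle : ∀ s ∈ Icc 0 τ, H s ≤ c * N * s := by
    have hg : MonotoneOn (fun s => c * N * s - H s) (Icc 0 τ) := by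
      apply monotoneOn_of_deriv_nonneg (convex_Icc 0 τ)
      · exact (continuousOn_const.mul continuousOn_id).sub
          (hHcont.mono (fun x hx => hsubO (hsubτ hx)))
      · intro x hx
        rw [interior_Icc] at hx
        have hxI : x ∈ Icc 0 τ := Ioo_subset_Icc_self hx
        exact (((hasDerivAt_id x).const_mul (c*N)).sub
          (hHderiv x (hsubO (hsubτ hxI)))).differentiableAt.differentiableWithinAt
      · intro x hx
        rw [interior_Icc] at hx
        have hxI : x ∈ Icc 0 τ := Ioo_subset_Icc_self hx
        have hd : HasDerivAt (fun s => c*N*s - H s) (c*N*1 - H' x) x :=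
          ((hasDerivAt_id x).const_mul (c*N)).sub (hHderiv x (hsubO (hsubτ hxI)))
        rw [hd.deriv]
        have := hH'bd N hN0 x (hsubI (hsubτ hxI)) (huN x hxI)
        linarith
    intro s hs
    have h0mem : (0:ℝ) ∈ Icc 0 τ := ⟨le_refl 0, hτ0⟩
    have hmono : c * N * 0 - H 0 ≤ c * N * s - H s := hg h0mem hs hs.1
    rw [hH0, mul_zero, sub_zero] at hmono
    linarith
  -- the drop estimate
  have hv : MonotoneOn (fun s => (A 0 - A s) + (K * (c*N*ε)) * s) (Icc 0 τ) := by
    apply monotoneOn_of_deriv_nonneg (convex_Icc 0 τ)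
    · exact (hucont.mono hsubτ).add (continuousOn_const.mul continuousOn_id)
    · intro x hx
      rw [interior_Icc] at hx
      have hxI : x ∈ Icc 0 τ := Ioo_subset_Icc_self hx
      exact (((hasDerivAt_const x (A 0)).sub (hAderiv x (hsubO (hsubτ hxI)))).add
        ((hasDerivAt_id x).const_mul (K*(c*N*ε)))).differentiableAt.differentiableWithinAt
    · intro x hx
      rw [interior_Icc] at hx
      have hxI : x ∈ Icc 0 τ := Ioo_subset_Icc_self hx
      have hxO := hsubO (hsubτ hxI)
      have hd : HasDerivAt (fun s => (A 0 - A s) + (K * (c*N*ε)) * s)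
          ((0 - A' x) + K*(c*N*ε)*1) x :=
        ((hasDerivAt_const x (A 0)).sub (hAderiv x hxO)).add
          ((hasDerivAt_id x).const_mul (K*(c*N*ε)))
      rw [hd.deriv]
      have hAx : A' x = H x * ξ x := hfirstvar x hxO
      have hHx : H x ≤ c * N * x := hHle x hxI
      have hξx : 0 < ξ x := hξpos x hxO
      have hξK : ξ x ≤ K := hqmax (hsubI (hsubτ hxI))
      have hxε : x ≤ ε := le_trans hxI.2 (le_trans hττ ht₀ε.le)
      have h1 : H x * ξ x ≤ c*N*x * ξ x := mul_le_mul_of_nonneg_right hHx hξx.le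
      have h2' : c*N*x * ξ x ≤ c*N*ε * K := by
        apply mul_le_mul _ hξK hξx.le (by positivity)
        have : 0 ≤ c * N := by positivity
        nlinarith
      have h3' : c*N*ε * K = K*(c*N*ε) := mul_comm _ _
      linarith
  have hτmem' : τ ∈ Icc 0 τ := ⟨hτ0, le_refl τ⟩
  have hdrop : (A 0 - A σ) + (K * (c*N*ε)) * σ ≤ (A 0 - A τ) + (K * (c*N*ε)) * τ :=
    hv hσmem hτmem' hστ
  -- M + K(cNε)σ ≤ m + K(cNε)τ
  have hτε : τ ≤ ε := le_trans hττ ht₀ε.le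
  have h4 : K*(c*N*ε)*(τ-σ) ≤ K*(c*N*ε)*ε :=
    mul_le_mul_of_nonneg_left (by linarith) (by positivity)
  have hfin : m ≥ M - K*(c*N*ε)*ε := by nlinarith
  have heq : K*(c*N*ε)*ε = (K*c*(ε*ε))*N := by ring
  have hβ0 : 0 ≤ K*c*(ε*ε) := by positivity
  have h5 : K*c*(ε*ε)*N ≤ K*c*(ε*ε)*(M-m) := mul_le_mul_of_nonneg_left hNle hβ0
  nlinarith [mul_pos (show (0:ℝ) < M - m by linarith)
    (show (0:ℝ) < 1 - K*c*(ε*ε) by linarith)]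

/-- Full analytic content of Proposition 4.1 (two-sided area comparison):
if `A` and `H` are C¹ on `(−ε₀, ε₀)`, `H(0) = 0`, `A′(t) = H(t)·ξ(t)` and
`H′(t)·φ(t) ≤ (R/2)·(A(0) − A(t))`, then `A(t) ≤ A(0)` on `(−ε, ε)` for some
`ε ∈ (0, ε₀]`. -/
theorem stmt_5 (ε₀ R : ℝ) (hε₀ : 0 < ε₀)
    (A A' H H' φ ξ : ℝ → ℝ)
    (hAderiv : ∀ t ∈ Ioo (-ε₀) ε₀, HasDerivAt A (A' t) t)
    (hA'cont : ContinuousOn A' (Ioo (-ε₀) ε₀))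
    (hHderiv : ∀ t ∈ Ioo (-ε₀) ε₀, HasDerivAt H (H' t) t)
    (hH'cont : ContinuousOn H' (Ioo (-ε₀) ε₀))
    (hH0 : H 0 = 0)
    (hφcont : ContinuousOn φ (Ioo (-ε₀) ε₀))
    (hξcont : ContinuousOn ξ (Ioo (-ε₀) ε₀))
    (hφpos : ∀ t ∈ Ioo (-ε₀) ε₀, 0 < φ t)
    (hξpos : ∀ t ∈ Ioo (-ε₀) ε₀, 0 < ξ t)
    (hfirstvar : ∀ t ∈ Ioo (-ε₀) ε₀, A' t = H t * ξ t)
    (hineq : ∀ t ∈ Ioo (-ε₀) ε₀, H' t * φ t ≤ (R / 2) * (A 0 - A t)) :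
    ∃ ε, 0 < ε ∧ ε ≤ ε₀ ∧ ∀ t ∈ Ioo (-ε) ε, A t ≤ A 0 := by
  have hmap : ∀ t ∈ Ioo (-ε₀) ε₀, -t ∈ Ioo (-ε₀) ε₀ := by
    intro t ht
    exact ⟨by linarith [ht.2], by linarith [ht.1]⟩
  obtain ⟨ε₁, hε₁pos, hε₁le, h₁⟩ := aux_one_side ε₀ R hε₀ A A' H H' φ ξ
    hAderiv hHderiv hH0 hφcont hξcont hφpos hξpos hfirstvar hineq
  have hmapsTo : MapsTo (fun t : ℝ => -t) (Ioo (-ε₀) ε₀) (Ioo (-ε₀) ε₀) :=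
    fun t ht => hmap t ht
  obtain ⟨ε₂, hε₂pos, hε₂le, h₂⟩ := aux_one_side ε₀ R hε₀
    (fun t => A (-t)) (fun t => -A' (-t)) (fun t => -H (-t)) (fun t => H' (-t))
    (fun t => φ (-t)) (fun t => ξ (-t))
    (by
      intro t ht
      have h := (hAderiv (-t) (hmap t ht)).comp t (hasDerivAt_neg t)
      simpa [Function.comp_def, mul_comm] using h)
    (by
      intro t ht
      have h := ((hHderiv (-t) (hmap t ht)).comp t (hasDerivAt_neg t)).neg
      simpa [Function.comp_def, Pi.neg_def, mul_comm] using h)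
    (by simp [hH0])
    (hφcont.comp continuousOn_neg hmapsTo)
    (hξcont.comp continuousOn_neg hmapsTo)
    (fun t ht => hφpos (-t) (hmap t ht))
    (fun t ht => hξpos (-t) (hmap t ht))
    (by
      intro t ht
      beta_reduce
      rw [hfirstvar (-t) (hmap t ht)]
      ring)
    (by
      intro t ht
      simp only [neg_zero]
      exact hineq (-t) (hmap t ht))
  refine ⟨min ε₁ ε₂, lt_min hε₁pos hε₂pos, le_trans (min_le_left _ _) hε₁le, ?_⟩
  intro t ht
  rcases le_total 0 t with h0t | ht0
  · exact h₁ t h0t (lt_of_lt_of_le ht.2 (min_le_left _ _))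
  · have hlt : -t < ε₂ := by
      have h := ht.1
      have hm2 : min ε₁ ε₂ ≤ ε₂ := min_le_right _ _
      linarith
    have := h₂ (-t) (by linarith) hlt
    simpa using this
end
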